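/- Let G = (M, w) be a weighted graph with m ≥ 2 vertices, and let x* minimize Σ_e x(e) over the set Γ = {x : 0 ≤ x ≤ w, I(x) = I(w)} of capacity-preserving fractional packings (where I(x) = min_{|P|≥2} (1/(|P|−1)) Σ_{e∈E_P} x(e)). Then Σ_e x*(e) − I(w) = (m−2) · I(w). -/

import Mathlib

open Finset
open scoped Classical

/-- `I_P(x) = (1/(|P|-1)) ∑_{e ∈ E_P} x e`, `E_P` = edges crossing the partition `P`. -/
noncomputable def IP {M : Type*} [Fintype M] [DecidableEq M] (x : Finset M → ℝ)
    (P : Finpartition (Finset.univ : Finset M)) : ℝ :=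
  ((P.parts.card : ℝ) - 1)⁻¹ *
    ∑ e ∈ Finset.univ.filter (fun e : Finset M => ¬ ∃ A ∈ P.parts, e ⊆ A), x e

/-- Multivariate mutual information `I(x) = min_{|P| ≥ 2} I_P(x)`. -/
noncomputable def MMI {M : Type*} [Fintype M] [DecidableEq M] (x : Finset M → ℝ) : ℝ :=
  sInf {r : ℝ | ∃ P : Finpartition (Finset.univ : Finset M), 2 ≤ P.parts.card ∧ r = IP x P}

/-- The set `Γ` of capacity-preserving fractional packings of the weighted graph `(M, w)`. -/
def Gamma {M : Type*} [Fintype M] [DecidableEq M] (w : Finset M → ℝ) :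
    Set (Finset M → ℝ) :=
  {x | (∀ e, 0 ≤ x e) ∧ (∀ e, x e ≤ w e) ∧ MMI x = MMI w}


section Aux

set_option linter.unusedSectionVars false

variable {M : Type*} [Fintype M] [DecidableEq M]

/-- set of edges (within `s`) crossing the partition `P`. -/
noncomputable def cutE {s : Finset M} (P : Finpartition s) : Finset (Finset M) :=
  s.powerset.filter (fun e => ¬ ∃ A ∈ P.parts, e ⊆ A)

lemma mem_cutE {s : Finset M} {P : Finpartition s} {e : Finset M} :
    e ∈ cutE P ↔ e ⊆ s ∧ ¬ ∃ A ∈ P.parts, e ⊆ A := by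
  simp [cutE]

lemma card_le_of_mem_cutE {s : Finset M} (hs : s.Nonempty) {P : Finpartition s} {e : Finset M}
    (he : e ∈ cutE P) : 2 ≤ e.card := by
  rw [mem_cutE] at he
  by_contra h
  push_neg at h
  have he1 : e.card ≤ 1 := Nat.lt_succ_iff.mp h
  have hsne : s ≠ ⊥ := by simpa [Finset.nonempty_iff_ne_empty] using hs
  rcases Nat.le_one_iff_eq_zero_or_eq_one.1 he1 with h0 | h1
  · obtain ⟨A, hA⟩ := P.parts_nonempty hsne
    exact he.2 ⟨A, hA, by simp [Finset.card_eq_zero.1 h0]⟩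
  · obtain ⟨a, ha⟩ := Finset.card_eq_one.1 h1
    obtain ⟨A, hA, haA⟩ := P.exists_mem (he.1 (by simp [ha] : a ∈ e))
    exact he.2 ⟨A, hA, by simp [ha, haA]⟩

/-- Restriction of a partition of `s` to a subset `A ⊆ s`. -/
noncomputable def restr {s : Finset M} (Q : Finpartition s) (A : Finset M) (hA : A ⊆ s) :
    Finpartition A :=
  Finpartition.ofErase (Q.parts.image (· ∩ A))
    (by
      rw [Finset.supIndep_iff_pairwiseDisjoint]
      intro u hu v hv huv
      simp only [Finset.coe_image, Set.mem_image, Finset.mem_coe] at hu hv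
      obtain ⟨B, hB, rfl⟩ := hu
      obtain ⟨C, hC, rfl⟩ := hv
      have hBC : B ≠ C := fun h => huv (by rw [h])
      have := Q.disjoint hB hC hBC
      exact (this.mono (Finset.inter_subset_left) (Finset.inter_subset_left)))
    (by
      rw [Finset.sup_image]
      have h1 : (Q.parts.sup (id ∘ fun B => B ∩ A)) = (Q.parts.sup fun B => B ∩ A) := rfl
      have h2 : (Q.parts.sup fun B => B ∩ A) = Q.parts.sup id ⊓ A := by
        rw [Finset.sup_inf_distrib_right]
        rfl
      rw [h1, h2, Q.sup_parts]
      exact Finset.inter_eq_right.2 hA)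

lemma restr_parts {s : Finset M} (Q : Finpartition s) (A : Finset M) (hA : A ⊆ s) :
    (restr Q A hA).parts = (Q.parts.image (· ∩ A)).erase ∅ := rfl

lemma mem_cutE_restr {s : Finset M} {Q : Finpartition s} {A : Finset M} {hA : A ⊆ s}
    {e : Finset M} (hAne : A.Nonempty) :
    e ∈ cutE (restr Q A hA) ↔ e ⊆ A ∧ ¬ ∃ B ∈ Q.parts, e ⊆ B := by
  rw [mem_cutE]
  constructor
  · rintro ⟨heA, hne⟩
    refine ⟨heA, ?_⟩
    rintro ⟨B, hB, heB⟩
    have hecard : e.Nonempty := by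
      rw [← Finset.card_pos]
      have := card_le_of_mem_cutE hAne (mem_cutE.2 ⟨heA, hne⟩)
      omega
    refine hne ⟨B ∩ A, ?_, Finset.subset_inter heB heA⟩
    rw [restr_parts, Finset.mem_erase]
    refine ⟨?_, Finset.mem_image_of_mem _ hB⟩
    intro h0
    have : e ⊆ (∅ : Finset M) := h0 ▸ Finset.subset_inter heB heA
    simp [Finset.subset_empty.1 this] at hecard
  · rintro ⟨heA, hne⟩
    refine ⟨heA, ?_⟩
    rintro ⟨C, hC, heC⟩
    rw [restr_parts, Finset.mem_erase, Finset.mem_image] at hC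
    obtain ⟨-, B, hB, rfl⟩ := hC
    exact hne ⟨B, hB, heC.trans Finset.inter_subset_left⟩

lemma card_restr_parts {s : Finset M} (Q : Finpartition s) (A : Finset M) (hA : A ⊆ s) :
    (restr Q A hA).parts.card = (Q.parts.filter fun B => (B ∩ A).Nonempty).card := by
  rw [restr_parts]
  have himg : (Q.parts.filter fun B => (B ∩ A).Nonempty).image (· ∩ A)
      = (Q.parts.image (· ∩ A)).erase ∅ := by
    ext t
    simp only [Finset.mem_image, Finset.mem_filter, Finset.mem_erase]
    constructor
    · rintro ⟨B, ⟨hB, hBA⟩, rfl⟩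
      exact ⟨Finset.nonempty_iff_ne_empty.1 hBA, B, hB, rfl⟩
    · rintro ⟨ht, B, hB, rfl⟩
      exact ⟨B, ⟨hB, Finset.nonempty_iff_ne_empty.2 ht⟩, rfl⟩
  rw [← himg]
  apply Finset.card_image_of_injOn
  intro B hB C hC hBC
  simp only at hBC
  simp only [Finset.mem_coe, Finset.mem_filter] at hB hC
  obtain ⟨a, ha⟩ := hB.2
  have ha' : a ∈ C ∩ A := hBC ▸ ha
  exact Q.eq_of_mem_parts hB.1 hC.1 (Finset.mem_inter.1 ha).1 (Finset.mem_inter.1 ha').1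

set_option linter.unusedSectionVars false

/-- a partition `R` is a coarsening of `Q` -/
def Coarser {s : Finset M} (Q R : Finpartition s) : Prop :=
  ∀ B ∈ Q.parts, ∃ C ∈ R.parts, B ⊆ C

lemma Coarser.rfl {s : Finset M} (Q : Finpartition s) : Coarser Q Q :=
  fun B hB => ⟨B, hB, subset_rfl⟩

lemma Coarser.trans {s : Finset M} {Q R T : Finpartition s} (h1 : Coarser Q R)
    (h2 : Coarser R T) : Coarser Q T := by
  intro B hB
  obtain ⟨C, hC, hBC⟩ := h1 B hB
  obtain ⟨D, hD, hCD⟩ := h2 C hC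
  exact ⟨D, hD, hBC.trans hCD⟩

lemma cutE_subset_of_coarser {s : Finset M} {Q R : Finpartition s} (h : Coarser Q R) :
    cutE R ⊆ cutE Q := by
  intro e he
  rw [mem_cutE] at he ⊢
  refine ⟨he.1, ?_⟩
  rintro ⟨B, hB, heB⟩
  obtain ⟨C, hC, hBC⟩ := h B hB
  exact he.2 ⟨C, hC, heB.trans hBC⟩

/-- Merging two parts of a partition. -/
noncomputable def mergeP {s : Finset M} (Q : Finpartition s) (B B' : Finset M)
    (hB : B ∈ Q.parts) (hB' : B' ∈ Q.parts) (hne : B ≠ B') : Finpartition s where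
  parts := insert (B ∪ B') ((Q.parts.erase B).erase B')
  supIndep := by
    rw [Finset.supIndep_iff_pairwiseDisjoint]
    intro u hu v hv huv
    simp only [Finset.coe_insert, Set.mem_insert_iff, Finset.mem_coe, Finset.mem_erase] at hu hv
    have key : ∀ C, C ≠ B' → C ≠ B → C ∈ Q.parts → Disjoint (B ∪ B') C := by
      intro C h1 h2 h3
      rw [Finset.disjoint_union_left]
      exact ⟨Q.disjoint hB h3 (Ne.symm h2), Q.disjoint hB' h3 (Ne.symm h1)⟩
    rcases hu with rfl | ⟨hu1, hu2, hu3⟩ <;> rcases hv with rfl | ⟨hv1, hv2, hv3⟩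
    · exact absurd rfl huv
    · exact key _ hv1 hv2 hv3
    · exact (key _ hu1 hu2 hu3).symm
    · exact Q.disjoint hu3 hv3 huv
  sup_parts := by
    have h1 : Q.parts = insert B (insert B' ((Q.parts.erase B).erase B')) := by
      rw [Finset.insert_erase (Finset.mem_erase.2 ⟨Ne.symm hne, hB'⟩), Finset.insert_erase hB]
    have := Q.sup_parts
    rw [h1] at this
    rw [Finset.sup_insert] at this ⊢
    rw [Finset.sup_insert] at this
    rw [← sup_assoc] at this
    exact this
  bot_notMem := by
    simp only [Finset.mem_insert, not_or, Finset.mem_erase]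
    constructor
    · intro h
      have := Q.nonempty_of_mem_parts hB
      rw [show (⊥ : Finset M) = ∅ from rfl] at h
      exact Finset.not_nonempty_empty (h ▸ this.mono Finset.subset_union_left)
    · rintro ⟨-, -, h⟩
      exact Q.bot_notMem h

lemma mergeP_parts_card {s : Finset M} (Q : Finpartition s) (B B' : Finset M)
    (hB : B ∈ Q.parts) (hB' : B' ∈ Q.parts) (hne : B ≠ B') :
    (mergeP Q B B' hB hB' hne).parts.card + 1 = Q.parts.card := by
  have hunion : B ∪ B' ∉ (Q.parts.erase B).erase B' := by
    intro h
    have h1 : B ∪ B' ∈ Q.parts := Finset.mem_of_mem_erase (Finset.mem_of_mem_erase h)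
    have h2 : B ∪ B' ≠ B := (Finset.mem_erase.1 (Finset.mem_of_mem_erase h)).1
    have := Q.disjoint hB h1 (Ne.symm h2)
    obtain ⟨a, ha⟩ := Q.nonempty_of_mem_parts hB
    exact Finset.disjoint_left.1 this ha (Finset.mem_union_left _ ha)
  show (insert (B ∪ B') ((Q.parts.erase B).erase B')).card + 1 = Q.parts.card
  rw [Finset.card_insert_of_notMem hunion,
    Finset.card_erase_of_mem (Finset.mem_erase.2 ⟨Ne.symm hne, hB'⟩), Finset.card_erase_of_mem hB]
  have h2 : 2 ≤ Q.parts.card := Finset.one_lt_card.2 ⟨B, hB, B', hB', hne⟩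
  omega

lemma mergeP_coarser {s : Finset M} (Q : Finpartition s) (B B' : Finset M)
    (hB : B ∈ Q.parts) (hB' : B' ∈ Q.parts) (hne : B ≠ B') :
    Coarser Q (mergeP Q B B' hB hB' hne) := by
  intro C hC
  by_cases h1 : C = B
  · exact ⟨B ∪ B', Finset.mem_insert_self _ _, h1 ▸ Finset.subset_union_left⟩
  by_cases h2 : C = B'
  · exact ⟨B ∪ B', Finset.mem_insert_self _ _, h2 ▸ Finset.subset_union_right⟩
  · exact ⟨C, Finset.mem_insert_of_mem (Finset.mem_erase.2 ⟨h2, Finset.mem_erase.2 ⟨h1, hC⟩⟩),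
      subset_rfl⟩

/-- number of nonempty pairwise intersections between parts of `P` and `Q`. -/
noncomputable def mc {s : Finset M} (P Q : Finpartition s) : ℕ :=
  ∑ A ∈ P.parts, (Q.parts.filter fun B => (A ∩ B).Nonempty).card

lemma card_filter_insert' {α : Type*} [DecidableEq α] (p : α → Prop) [DecidablePred p] (a : α) (s : Finset α)
    (ha : a ∉ s) :
    ((insert a s).filter p).card = (s.filter p).card + (if p a then 1 else 0) := by
  rw [Finset.filter_insert]
  split
  · rw [Finset.card_insert_of_notMem (fun h => ha (Finset.mem_of_mem_filter _ h))]
  · simp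

lemma parts_eq_insert {s : Finset M} (Q : Finpartition s) (B B' : Finset M)
    (hB : B ∈ Q.parts) (hB' : B' ∈ Q.parts) (hne : B ≠ B') :
    Q.parts = insert B (insert B' ((Q.parts.erase B).erase B')) := by
  rw [Finset.insert_erase (Finset.mem_erase.2 ⟨Ne.symm hne, hB'⟩), Finset.insert_erase hB]

lemma union_not_mem_erase {s : Finset M} (Q : Finpartition s) (B B' : Finset M)
    (hB : B ∈ Q.parts) (hB' : B' ∈ Q.parts) (hne : B ≠ B') :
    B ∪ B' ∉ (Q.parts.erase B).erase B' := by
  intro h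
  have h1 : B ∪ B' ∈ Q.parts := Finset.mem_of_mem_erase (Finset.mem_of_mem_erase h)
  have h2 : B ∪ B' ≠ B := (Finset.mem_erase.1 (Finset.mem_of_mem_erase h)).1
  have := Q.disjoint hB h1 (Ne.symm h2)
  obtain ⟨a, ha⟩ := Q.nonempty_of_mem_parts hB
  exact Finset.disjoint_left.1 this ha (Finset.mem_union_left _ ha)

lemma mc_mergeP {s : Finset M} (P Q : Finpartition s) (B B' : Finset M)
    (hB : B ∈ Q.parts) (hB' : B' ∈ Q.parts) (hne : B ≠ B') :
    mc P (mergeP Q B B' hB hB' hne)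
      + (P.parts.filter fun A => (A ∩ B).Nonempty ∧ (A ∩ B').Nonempty).card = mc P Q := by
  unfold mc
  rw [Finset.card_filter, ← Finset.sum_add_distrib]
  apply Finset.sum_congr rfl
  intro A _
  have hparts : (mergeP Q B B' hB hB' hne).parts
      = insert (B ∪ B') ((Q.parts.erase B).erase B') := rfl
  have hBE : B ∉ insert B' ((Q.parts.erase B).erase B') := by simp [hne]
  have hB'E : B' ∉ (Q.parts.erase B).erase B' := by simp
  have hUE := union_not_mem_erase Q B B' hB hB' hne
  conv_rhs => rw [parts_eq_insert Q B B' hB hB' hne]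
  rw [hparts]
  rw [card_filter_insert' _ _ _ hUE, card_filter_insert' _ _ _ hBE, card_filter_insert' _ _ _ hB'E]
  have hiff : (A ∩ (B ∪ B')).Nonempty ↔ (A ∩ B).Nonempty ∨ (A ∩ B').Nonempty := by
    rw [Finset.inter_union_distrib_left]
    simp [Finset.Nonempty, Finset.mem_union, exists_or]
  by_cases p1 : (A ∩ B).Nonempty <;> by_cases p2 : (A ∩ B').Nonempty <;>
    simp [hiff, p1, p2]

lemma supermod {s : Finset M} (P : Finpartition s) :
    ∀ k (Q : Finpartition s), Q.parts.card ≤ k →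
    ∃ R : Finpartition s, Coarser Q R ∧ Coarser P R ∧
      P.parts.card + Q.parts.card ≤ R.parts.card + mc P Q := by
  intro k
  induction k with
  | zero =>
    intro Q hQ
    have hQ0 : Q.parts = ∅ := Finset.card_eq_zero.1 (Nat.le_zero.1 hQ)
    have hs : s = ⊥ := Finpartition.parts_eq_empty_iff.1 hQ0
    have hP0 : P.parts = ∅ := Finpartition.parts_eq_empty_iff.2 hs
    exact ⟨Q, Coarser.rfl Q, by simp [Coarser, hP0], by simp [hP0, hQ0]⟩
  | succ k ih =>
    intro Q hQ
    by_cases hcase : ∃ A ∈ P.parts, ∃ B ∈ Q.parts, ∃ B' ∈ Q.parts,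
        B ≠ B' ∧ (A ∩ B).Nonempty ∧ (A ∩ B').Nonempty
    · obtain ⟨A, hA, B, hB, B', hB', hne, h1, h2⟩ := hcase
      have hcard := mergeP_parts_card Q B B' hB hB' hne
      obtain ⟨R, hQR, hPR, hsum⟩ := ih (mergeP Q B B' hB hB' hne) (by omega)
      refine ⟨R, (mergeP_coarser Q B B' hB hB' hne).trans hQR, hPR, ?_⟩
      have hmc := mc_mergeP P Q B B' hB hB' hne
      have hone : 1 ≤ (P.parts.filter fun A => (A ∩ B).Nonempty ∧ (A ∩ B').Nonempty).card :=
        Finset.card_pos.2 ⟨A, Finset.mem_filter.2 ⟨hA, h1, h2⟩⟩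
      omega
    · push_neg at hcase
      refine ⟨Q, Coarser.rfl Q, ?_, ?_⟩
      · intro A hA
        obtain ⟨a, ha⟩ := P.nonempty_of_mem_parts hA
        have has : a ∈ s := P.le hA ha
        obtain ⟨Ba, hBa, haBa⟩ := Q.exists_mem has
        refine ⟨Ba, hBa, ?_⟩
        intro x hx
        have hxs : x ∈ s := P.le hA hx
        obtain ⟨Bx, hBx, hxBx⟩ := Q.exists_mem hxs
        by_cases hBB : Bx = Ba
        · exact hBB ▸ hxBx
        · exact absurd (hcase A hA Bx hBx Ba hBa hBB ⟨x, Finset.mem_inter.2 ⟨hx, hxBx⟩⟩)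
            (Finset.nonempty_iff_ne_empty.1 (⟨a, Finset.mem_inter.2 ⟨ha, haBa⟩⟩ : (A ∩ Ba).Nonempty))
      · have : P.parts.card ≤ mc P Q := by
          unfold mc
          calc P.parts.card = ∑ _A ∈ P.parts, 1 := by simp
          _ ≤ _ := by
            apply Finset.sum_le_sum
            intro A hA
            obtain ⟨a, ha⟩ := P.nonempty_of_mem_parts hA
            have has : a ∈ s := P.le hA ha
            obtain ⟨Ba, hBa, haBa⟩ := Q.exists_mem has
            exact Finset.card_pos.2 ⟨Ba, Finset.mem_filter.2 ⟨hBa, a, Finset.mem_inter.2 ⟨ha, haBa⟩⟩⟩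
        omega

/-- Refining a partition `P` of `s` by replacing the part `A` with a partition `QA` of `A`. -/
noncomputable def refineAt {s : Finset M} (P : Finpartition s) (A : Finset M)
    (hA : A ∈ P.parts) (QA : Finpartition A) : Finpartition s where
  parts := QA.parts ∪ (P.parts.erase A)
  supIndep := by
    rw [Finset.supIndep_iff_pairwiseDisjoint]
    intro u hu v hv huv
    simp only [Finset.coe_union, Set.mem_union, Finset.mem_coe, Finset.mem_erase] at hu hv
    have key : ∀ u v, u ∈ QA.parts → v ≠ A → v ∈ P.parts → Disjoint u v := by
      intro u v hu hv1 hv2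
      exact Finset.disjoint_of_subset_left (QA.le hu) (P.disjoint hA hv2 (Ne.symm hv1))
    rcases hu with hu | ⟨hu1, hu2⟩ <;> rcases hv with hv | ⟨hv1, hv2⟩
    · exact QA.disjoint hu hv huv
    · exact key _ _ hu hv1 hv2
    · exact (key _ _ hv hu1 hu2).symm
    · exact P.disjoint hu2 hv2 huv
  sup_parts := by
    rw [Finset.sup_union, QA.sup_parts]
    have : P.parts = insert A (P.parts.erase A) := (Finset.insert_erase hA).symm
    conv_rhs => rw [← P.sup_parts, this, Finset.sup_insert]
    rfl
  bot_notMem := by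
    simp only [Finset.mem_union, Finset.mem_erase, not_or]
    exact ⟨QA.bot_notMem, fun h => P.bot_notMem h.2⟩

lemma refineAt_parts_card {s : Finset M} (P : Finpartition s) (A : Finset M)
    (hA : A ∈ P.parts) (QA : Finpartition A) :
    (refineAt P A hA QA).parts.card + 1 = QA.parts.card + P.parts.card := by
  have hdisj : Disjoint QA.parts (P.parts.erase A) := by
    rw [Finset.disjoint_left]
    intro C hC hC'
    rw [Finset.mem_erase] at hC'
    have h1 : C ⊆ A := QA.le hC
    have := P.disjoint hC'.2 hA hC'.1
    obtain ⟨a, ha⟩ := QA.nonempty_of_mem_parts hC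
    exact Finset.disjoint_left.1 this ha (h1 ha)
  show (QA.parts ∪ P.parts.erase A).card + 1 = _
  rw [Finset.card_union_of_disjoint hdisj, Finset.card_erase_of_mem hA]
  have : 1 ≤ P.parts.card := Finset.card_pos.2 ⟨A, hA⟩
  omega

lemma cutE_refineAt_subset {s : Finset M} (P : Finpartition s) (A : Finset M)
    (hA : A ∈ P.parts) (QA : Finpartition A) :
    cutE (refineAt P A hA QA) ⊆ cutE P ∪ cutE QA := by
  intro e he
  rw [mem_cutE] at he
  rw [Finset.mem_union, mem_cutE, mem_cutE]
  by_cases hP : ∃ B ∈ P.parts, e ⊆ B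
  · right
    obtain ⟨B, hB, heB⟩ := hP
    by_cases hBA : B = A
    · refine ⟨hBA ▸ heB, ?_⟩
      rintro ⟨C, hC, heC⟩
      exact he.2 ⟨C, Finset.mem_union_left _ hC, heC⟩
    · exact absurd ⟨B, Finset.mem_union_right _ (Finset.mem_erase.2 ⟨hBA, hB⟩), heB⟩ he.2
  · exact Or.inl ⟨he.1, hP⟩

lemma lemA : ∀ (n : ℕ) (s : Finset M), s.card ≤ n → s.Nonempty →
    ∀ (w : Finset M → ℝ), (∀ e, 0 ≤ w e) → ∀ lam : ℝ, 0 ≤ lam →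
    (∀ P : Finpartition s, 2 ≤ P.parts.card →
      ((P.parts.card : ℝ) - 1) * lam ≤ ∑ e ∈ cutE P, w e) →
    ∃ x : Finset M → ℝ, (∀ e, 0 ≤ x e) ∧ (∀ e, x e ≤ w e) ∧
      (∀ e, ¬ (e ⊆ s ∧ 2 ≤ e.card) → x e = 0) ∧
      (∀ P : Finpartition s, 2 ≤ P.parts.card →
        ((P.parts.card : ℝ) - 1) * lam ≤ ∑ e ∈ cutE P, x e) ∧
      (∑ e ∈ s.powerset, x e) ≤ ((s.card : ℝ) - 1) * lam := by
  intro n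
  induction n with
  | zero =>
    intro s hs hsne
    exact absurd (Finset.card_pos.2 hsne) (by omega)
  | succ n ih =>
    intro s hsn hsne w hw lam hlam hge
    by_cases hs1 : s.card ≤ 1
    · refine ⟨0, fun e => le_rfl, fun e => hw e, fun e _ => rfl, ?_, ?_⟩
      · intro P hP
        exact absurd (P.card_parts_le_card.trans hs1) (by omega)
      · have : s.card = 1 := le_antisymm hs1 (Finset.card_pos.2 hsne)
        simp [this]
    by_cases hlam0 : lam = 0
    · subst hlam0
      refine ⟨0, fun e => le_rfl, fun e => hw e, fun e _ => rfl, ?_, ?_⟩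
      · intro P hP
        simp only [Pi.zero_apply, Finset.sum_const_zero, mul_zero]
        exact le_rfl
      · simp
    push_neg at hs1
    have hlampos : 0 < lam := lt_of_le_of_ne hlam (Ne.symm hlam0)
    -- choose the optimal (tight) partition Pst
    have hTne : (Finset.univ.filter (fun P : Finpartition s => 2 ≤ P.parts.card)).Nonempty := by
      refine ⟨⊥, Finset.mem_filter.2 ⟨Finset.mem_univ _, ?_⟩⟩
      rw [Finpartition.card_bot]
      exact hs1
    obtain ⟨Pst, hPstT, hmin⟩ := Finset.exists_min_image
      (Finset.univ.filter (fun P : Finpartition s => 2 ≤ P.parts.card))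
      (fun P : Finpartition s => (∑ e ∈ cutE P, w e) / ((P.parts.card : ℝ) - 1)) hTne
    have hPst2 : 2 ≤ Pst.parts.card := (Finset.mem_filter.1 hPstT).2
    set μ : ℝ := (∑ e ∈ cutE Pst, w e) / ((Pst.parts.card : ℝ) - 1) with hμdef
    have hdpos : ∀ P : Finpartition s, 2 ≤ P.parts.card → (0:ℝ) < (P.parts.card : ℝ) - 1 := by
      intro P hP
      have : (2:ℝ) ≤ (P.parts.card : ℝ) := by exact_mod_cast hP
      linarith
    have hμtight : ∑ e ∈ cutE Pst, w e = ((Pst.parts.card : ℝ) - 1) * μ := by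
      rw [hμdef]
      rw [mul_comm, div_mul_cancel₀ _ (ne_of_gt (hdpos Pst hPst2))]
    have hμge : ∀ P : Finpartition s, 2 ≤ P.parts.card →
        ((P.parts.card : ℝ) - 1) * μ ≤ ∑ e ∈ cutE P, w e := by
      intro P hP
      have := hmin P (Finset.mem_filter.2 ⟨Finset.mem_univ _, hP⟩)
      rw [le_div_iff₀ (hdpos P hP)] at this
      linarith [this]
    have hlamμ : lam ≤ μ := by
      have h1 := hge Pst hPst2
      rw [hμtight] at h1
      exact le_of_mul_le_mul_left (by linarith [h1]) (hdpos Pst hPst2)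
    have hμpos : 0 < μ := lt_of_lt_of_le hlampos hlamμ
    -- per-part data
    have hApart : ∀ A : Finset M, A ∈ Pst.parts → A ⊆ s ∧ A.Nonempty ∧ A.card ≤ n := by
      intro A hA
      have hAs : A ⊆ s := Pst.le hA
      have hAne := Pst.nonempty_of_mem_parts hA
      refine ⟨hAs, hAne, ?_⟩
      obtain ⟨B, hB, hBA⟩ : ∃ B ∈ Pst.parts, B ≠ A := by
        obtain ⟨u, hu, v, hv, huv⟩ := Finset.one_lt_card.1 hPst2
        by_cases h : u = A
        · exact ⟨v, hv, fun hv' => huv (h.trans hv'.symm)⟩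
        · exact ⟨u, hu, h⟩
      obtain ⟨b, hb⟩ := Pst.nonempty_of_mem_parts hB
      have hbA : b ∉ A := Finset.disjoint_left.1 (Pst.disjoint hB hA hBA) hb
      have : A ⊂ s := Finset.ssubset_iff_of_subset hAs |>.2 ⟨b, Pst.le hB hb, hbA⟩
      have := Finset.card_lt_card this
      omega
    -- lower bounds within the parts
    have hgeA : ∀ A : Finset M, A ∈ Pst.parts → ∀ QA : Finpartition A, 2 ≤ QA.parts.card →
        ((QA.parts.card : ℝ) - 1) * μ ≤ ∑ e ∈ cutE QA, w e := by
      intro A hA QA hQA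
      have hRcard := refineAt_parts_card Pst A hA QA
      have hR2 : 2 ≤ (refineAt Pst A hA QA).parts.card := by omega
      have h1 := hμge _ hR2
      have h2 : ∑ e ∈ cutE (refineAt Pst A hA QA), w e
          ≤ ∑ e ∈ cutE Pst ∪ cutE QA, w e :=
        Finset.sum_le_sum_of_subset_of_nonneg (cutE_refineAt_subset Pst A hA QA)
          (fun e _ _ => hw e)
      have h3 : ∑ e ∈ cutE Pst ∪ cutE QA, w e ≤ ∑ e ∈ cutE Pst, w e + ∑ e ∈ cutE QA, w e := by
        have h4 := Finset.sum_union_inter (s₁ := cutE Pst) (s₂ := cutE QA) (f := w)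
        have h5 : 0 ≤ ∑ e ∈ cutE Pst ∩ cutE QA, w e := Finset.sum_nonneg (fun e _ => hw e)
        linarith
      have hcast : ((refineAt Pst A hA QA).parts.card : ℝ) + 1
          = (QA.parts.card : ℝ) + (Pst.parts.card : ℝ) := by exact_mod_cast congrArg (Nat.cast : ℕ → ℝ) hRcard
      rw [hμtight] at h3
      have hr : ((refineAt Pst A hA QA).parts.card : ℝ) - 1
          = ((QA.parts.card : ℝ) - 1) + ((Pst.parts.card : ℝ) - 1) := by linarith
      rw [hr, add_mul] at h1
      linarith
    -- apply the induction hypothesis inside every part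
    have hch : ∀ A : Finset M, ∃ xA : Finset M → ℝ, A ∈ Pst.parts →
        ((∀ e, 0 ≤ xA e) ∧ (∀ e, xA e ≤ w e) ∧
        (∀ e, ¬ (e ⊆ A ∧ 2 ≤ e.card) → xA e = 0) ∧
        (∀ P : Finpartition A, 2 ≤ P.parts.card →
          ((P.parts.card : ℝ) - 1) * μ ≤ ∑ e ∈ cutE P, xA e) ∧
        (∑ e ∈ A.powerset, xA e) ≤ ((A.card : ℝ) - 1) * μ) := by
      intro A
      by_cases hA : A ∈ Pst.parts
      · obtain ⟨hAs, hAne, hAn⟩ := hApart A hA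
        obtain ⟨xA, h⟩ := ih A hAn hAne w hw μ hμpos.le (hgeA A hA)
        exact ⟨xA, fun _ => h⟩
      · exact ⟨0, fun h => absurd h hA⟩
    choose xA hxA using hch
    set y : Finset M → ℝ := fun e => if e ∈ cutE Pst then w e else ∑ A ∈ Pst.parts, xA A e
      with hydef
    have hy0 : ∀ e, 0 ≤ y e := by
      intro e
      rw [hydef]
      dsimp only
      split
      · exact hw e
      · exact Finset.sum_nonneg (fun A hA => ((hxA A hA).1 e))
    have hyw : ∀ e, y e ≤ w e := by
      intro e
      rw [hydef]
      dsimp only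
      split
      · exact le_rfl
      · by_cases hex : ∃ A ∈ Pst.parts, e ⊆ A ∧ 2 ≤ e.card
        · obtain ⟨A0, hA0, heA0, hecard⟩ := hex
          rw [Finset.sum_eq_single A0]
          · exact (hxA A0 hA0).2.1 e
          · intro A hA hAne0
            apply (hxA A hA).2.2.1
            rintro ⟨heA, -⟩
            obtain ⟨a, ha⟩ : e.Nonempty := Finset.card_pos.1 (by omega)
            exact hAne0 (Pst.eq_of_mem_parts hA hA0 (heA ha) (heA0 ha))
          · intro h
            exact absurd hA0 h
        · rw [Finset.sum_eq_zero]
          · exact hw e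
          · intro A hA
            apply (hxA A hA).2.2.1
            rintro ⟨heA, hecard⟩
            exact hex ⟨A, hA, heA, hecard⟩
    have hysupp : ∀ e, ¬ (e ⊆ s ∧ 2 ≤ e.card) → y e = 0 := by
      intro e he
      rw [hydef]
      dsimp only
      split
      · rename_i hmem
        exact absurd ⟨Finset.mem_powerset.1 (Finset.mem_of_mem_filter _ hmem),
          card_le_of_mem_cutE hsne hmem⟩ he
      · apply Finset.sum_eq_zero
        intro A hA
        apply (hxA A hA).2.2.1
        rintro ⟨heA, hecard⟩
        exact he ⟨heA.trans (Pst.le hA), hecard⟩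
    -- the partition constraints for y
    have hycon : ∀ Q : Finpartition s, 2 ≤ Q.parts.card →
        ((Q.parts.card : ℝ) - 1) * μ ≤ ∑ e ∈ cutE Q, y e := by
      intro Q hQ2
      obtain ⟨R, hQR, hPR, hsm⟩ := supermod Pst Q.parts.card Q le_rfl
      -- split the cut sum
      have hsplit : ∑ e ∈ cutE Q, y e
          = ∑ e ∈ cutE Q ∩ cutE Pst, w e
            + ∑ e ∈ cutE Q \ cutE Pst, (∑ A ∈ Pst.parts, xA A e) := by
        rw [← Finset.sum_inter_add_sum_sdiff (cutE Q) (cutE Pst) y]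
        congr 1
        · apply Finset.sum_congr rfl
          intro e he
          rw [hydef]
          exact if_pos (Finset.mem_inter.1 he).2
        · apply Finset.sum_congr rfl
          intro e he
          rw [hydef]
          exact if_neg (Finset.mem_sdiff.1 he).2
      -- the crossing-edge part
      have hW : ((R.parts.card : ℝ) - 1) * μ ≤ ∑ e ∈ cutE Q ∩ cutE Pst, w e := by
        have hsub : cutE R ⊆ cutE Q ∩ cutE Pst :=
          Finset.subset_inter (cutE_subset_of_coarser hQR) (cutE_subset_of_coarser hPR)
        have hsum : ∑ e ∈ cutE R, w e ≤ ∑ e ∈ cutE Q ∩ cutE Pst, w e :=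
          Finset.sum_le_sum_of_subset_of_nonneg hsub (fun e _ _ => hw e)
        by_cases hR2 : 2 ≤ R.parts.card
        · exact (hμge R hR2).trans hsum
        · have hR1 : R.parts.card = 1 := by
            have : R.parts.Nonempty := R.parts_nonempty
              (by simpa [Finset.nonempty_iff_ne_empty] using hsne)
            have := Finset.card_pos.2 this
            omega
          rw [hR1]
          simp only [Nat.cast_one, sub_self, zero_mul]
          exact le_trans (Finset.sum_nonneg (fun e _ => hw e)) hsum
      -- the within-part contributions
      have hparts : ∀ A ∈ Pst.parts,
          (((Q.parts.filter fun B => (A ∩ B).Nonempty).card : ℝ) - 1) * μ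
            ≤ ∑ e ∈ cutE Q \ cutE Pst, xA A e := by
        intro A hA
        have hAs : A ⊆ s := Pst.le hA
        have hAne := Pst.nonempty_of_mem_parts hA
        have hcomm : (Q.parts.filter fun B => (A ∩ B).Nonempty)
            = (Q.parts.filter fun B => (B ∩ A).Nonempty) := by
          ext B
          rw [Finset.mem_filter, Finset.mem_filter, Finset.inter_comm]
        rw [hcomm, ← card_restr_parts Q A hAs]
        have hsub : cutE (restr Q A hAs) ⊆ cutE Q \ cutE Pst := by
          intro e he
          rw [mem_cutE_restr hAne] at he
          rw [Finset.mem_sdiff, mem_cutE, mem_cutE]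
          exact ⟨⟨he.1.trans hAs, he.2⟩, fun h => h.2 ⟨A, hA, he.1⟩⟩
        have hsum : ∑ e ∈ cutE (restr Q A hAs), xA A e ≤ ∑ e ∈ cutE Q \ cutE Pst, xA A e :=
          Finset.sum_le_sum_of_subset_of_nonneg hsub (fun e _ _ => (hxA A hA).1 e)
        by_cases hq2 : 2 ≤ (restr Q A hAs).parts.card
        · exact ((hxA A hA).2.2.2.1 (restr Q A hAs) hq2).trans hsum
        · have hq1 : (restr Q A hAs).parts.card = 1 := by
            have : (restr Q A hAs).parts.Nonempty := (restr Q A hAs).parts_nonempty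
              (by simpa [Finset.nonempty_iff_ne_empty] using hAne)
            have := Finset.card_pos.2 this
            omega
          rw [hq1]
          simp only [Nat.cast_one, sub_self, zero_mul]
          exact le_trans (Finset.sum_nonneg (fun e _ => (hxA A hA).1 e)) hsum
      -- assemble the bound
      have hsum2 : ∑ A ∈ Pst.parts, (((Q.parts.filter fun B => (A ∩ B).Nonempty).card : ℝ) - 1) * μ
          ≤ ∑ e ∈ cutE Q \ cutE Pst, (∑ A ∈ Pst.parts, xA A e) := by
        rw [Finset.sum_comm]
        exact Finset.sum_le_sum hparts
      have hmccast : ∑ A ∈ Pst.parts, (((Q.parts.filter fun B => (A ∩ B).Nonempty).card : ℝ) - 1)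
          = (mc Pst Q : ℝ) - (Pst.parts.card : ℝ) := by
        rw [Finset.sum_sub_distrib, Finset.sum_const, nsmul_eq_mul, mul_one]
        unfold mc
        push_cast
        ring
      have harith : ((Q.parts.card : ℝ) - 1)
          ≤ ((R.parts.card : ℝ) - 1) + ((mc Pst Q : ℝ) - (Pst.parts.card : ℝ)) := by
        have : (Pst.parts.card : ℝ) + (Q.parts.card : ℝ)
            ≤ (R.parts.card : ℝ) + (mc Pst Q : ℝ) := by exact_mod_cast hsm
        linarith
      calc ((Q.parts.card : ℝ) - 1) * μ
          ≤ (((R.parts.card : ℝ) - 1) + ((mc Pst Q : ℝ) - (Pst.parts.card : ℝ))) * μ :=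
            mul_le_mul_of_nonneg_right harith hμpos.le
        _ = ((R.parts.card : ℝ) - 1) * μ
            + ((mc Pst Q : ℝ) - (Pst.parts.card : ℝ)) * μ := by ring
        _ ≤ ∑ e ∈ cutE Q ∩ cutE Pst, w e
            + ∑ e ∈ cutE Q \ cutE Pst, (∑ A ∈ Pst.parts, xA A e) := by
            apply add_le_add hW
            calc ((mc Pst Q : ℝ) - (Pst.parts.card : ℝ)) * μ
                = ∑ A ∈ Pst.parts,
                  (((Q.parts.filter fun B => (A ∩ B).Nonempty).card : ℝ) - 1) * μ := by
                  rw [← Finset.sum_mul, hmccast]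
              _ ≤ _ := hsum2
        _ = ∑ e ∈ cutE Q, y e := hsplit.symm
    -- the total sum bound for y
    have hytot : ∑ e ∈ s.powerset, y e ≤ ((s.card : ℝ) - 1) * μ := by
      have hcutsub : cutE Pst ⊆ s.powerset := Finset.filter_subset _ _
      have hsplit : ∑ e ∈ s.powerset, y e
          = ∑ e ∈ cutE Pst, w e
            + ∑ e ∈ s.powerset \ cutE Pst, (∑ A ∈ Pst.parts, xA A e) := by
        rw [← Finset.sum_inter_add_sum_sdiff (s.powerset) (cutE Pst) y]
        congr 1
        · rw [Finset.inter_eq_right.2 hcutsub]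
          apply Finset.sum_congr rfl
          intro e he
          rw [hydef]
          exact if_pos he
        · apply Finset.sum_congr rfl
          intro e he
          rw [hydef]
          exact if_neg (Finset.mem_sdiff.1 he).2
      have hpartsum : ∑ e ∈ s.powerset \ cutE Pst, (∑ A ∈ Pst.parts, xA A e)
          ≤ ∑ A ∈ Pst.parts, ((A.card : ℝ) - 1) * μ := by
        rw [Finset.sum_comm]
        apply Finset.sum_le_sum
        intro A hA
        have hAs : A ⊆ s := Pst.le hA
        have heq : ∑ e ∈ A.powerset, xA A e = ∑ e ∈ s.powerset \ cutE Pst, xA A e := by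
          apply Finset.sum_subset
          · intro e he
            rw [Finset.mem_powerset] at he
            rw [Finset.mem_sdiff, Finset.mem_powerset, mem_cutE]
            exact ⟨he.trans hAs, fun h => h.2 ⟨A, hA, he⟩⟩
          · intro e _ he
            apply (hxA A hA).2.2.1
            rintro ⟨heA, -⟩
            exact he (Finset.mem_powerset.2 heA)
        rw [← heq]
        exact (hxA A hA).2.2.2.2
      have hcards : ∑ A ∈ Pst.parts, ((A.card : ℝ) - 1) * μ
          = ((s.card : ℝ) - (Pst.parts.card : ℝ)) * μ := by
        rw [← Finset.sum_mul]
        congr 1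
        rw [Finset.sum_sub_distrib, Finset.sum_const, nsmul_eq_mul, mul_one]
        have := Pst.sum_card_parts
        push_cast [← this]
        ring
      rw [hsplit, hμtight]
      rw [hcards] at hpartsum
      have : ((Pst.parts.card : ℝ) - 1) * μ + ((s.card : ℝ) - (Pst.parts.card : ℝ)) * μ
          = ((s.card : ℝ) - 1) * μ := by ring
      linarith
    -- scale down from μ to lam
    refine ⟨fun e => (lam / μ) * y e, ?_, ?_, ?_, ?_, ?_⟩
    · intro e
      exact mul_nonneg (div_nonneg hlam hμpos.le) (hy0 e)
    · intro e
      calc (lam / μ) * y e ≤ 1 * y e := by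
            apply mul_le_mul_of_nonneg_right _ (hy0 e)
            rw [div_le_one hμpos]
            exact hlamμ
        _ = y e := one_mul _
        _ ≤ w e := hyw e
    · intro e he
      show lam / μ * y e = 0
      rw [hysupp e he, mul_zero]
    · intro Q hQ2
      rw [← Finset.mul_sum]
      have h1 := hycon Q hQ2
      have h2 : ((Q.parts.card : ℝ) - 1) * lam
          = (lam / μ) * (((Q.parts.card : ℝ) - 1) * μ) := by
        field_simp
      rw [h2]
      exact mul_le_mul_of_nonneg_left h1 (div_nonneg hlam hμpos.le)
    · rw [← Finset.mul_sum]
      have h2 : ((s.card : ℝ) - 1) * lam = (lam / μ) * (((s.card : ℝ) - 1) * μ) := by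
        field_simp
      rw [h2]
      exact mul_le_mul_of_nonneg_left hytot (div_nonneg hlam hμpos.le)


end Aux

/-- **Theorem 2.** For a graphical source on `(M, w)` with `m = |M| ≥ 2`,
if `x*` minimizes `∑_e x e` over the capacity-preserving fractional packings `Γ`, then
`∑_e x* e - I(w) = (m - 2) · I(w)`; i.e., the upper bound on the communication complexity
reduces to `(m-2) I(X_M)`. -/
theorem graphical_upper_bound {M : Type*} [Fintype M] [DecidableEq M]
    (hm : 2 ≤ Fintype.card M)
    (w : Finset M → ℝ) (hw : ∀ e, 0 ≤ w e)
    (h2 : ∀ e, 0 < w e → e.card = 2)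
    (xs : Finset M → ℝ) (hxs : xs ∈ Gamma w)
    (hopt : ∀ x ∈ Gamma w, (∑ e : Finset M, xs e) ≤ ∑ e : Finset M, x e) :
    (∑ e : Finset M, xs e) - MMI w = ((Fintype.card M : ℝ) - 2) * MMI w := by
  classical
  have hIPcut : ∀ (x : Finset M → ℝ) (P : Finpartition (Finset.univ : Finset M)),
      IP x P = ((P.parts.card : ℝ) - 1)⁻¹ * ∑ e ∈ cutE P, x e := by
    intro x P
    unfold IP cutE
    rw [Finset.powerset_univ]
  have hfin : ∀ x : Finset M → ℝ,
      {r : ℝ | ∃ P : Finpartition (Finset.univ : Finset M), 2 ≤ P.parts.card ∧ r = IP x P}.Finite := by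
    intro x
    apply Set.Finite.subset (Set.finite_range (fun P : Finpartition (Finset.univ : Finset M) => IP x P))
    rintro r ⟨P, -, rfl⟩
    exact ⟨P, rfl⟩
  have hm' : 2 ≤ (Finset.univ : Finset M).card := by rwa [Finset.card_univ]
  have hbotcard : (⊥ : Finpartition (Finset.univ : Finset M)).parts.card = Fintype.card M := by
    rw [Finpartition.card_bot, Finset.card_univ]
  have hne : ∀ x : Finset M → ℝ,
      {r : ℝ | ∃ P : Finpartition (Finset.univ : Finset M), 2 ≤ P.parts.card ∧ r = IP x P}.Nonempty := by
    intro x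
    exact ⟨IP x ⊥, ⊥, by rw [hbotcard]; exact hm, rfl⟩
  have hbdd : ∀ x : Finset M → ℝ, BddBelow
      {r : ℝ | ∃ P : Finpartition (Finset.univ : Finset M), 2 ≤ P.parts.card ∧ r = IP x P} :=
    fun x => (hfin x).bddBelow
  have huvne : (Finset.univ : Finset M).Nonempty := Finset.card_pos.1 (by omega)
  have hd : ∀ P : Finpartition (Finset.univ : Finset M), 2 ≤ P.parts.card →
      (0:ℝ) < (P.parts.card : ℝ) - 1 := by
    intro P hP
    have : (2:ℝ) ≤ (P.parts.card : ℝ) := by exact_mod_cast hP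
    linarith
  set lam := MMI w with hlamdef
  have hlam0 : 0 ≤ lam := by
    apply le_csInf (hne w)
    rintro r ⟨P, hP2, rfl⟩
    rw [hIPcut]
    exact mul_nonneg (inv_nonneg.2 (le_of_lt (hd P hP2))) (Finset.sum_nonneg fun e _ => hw e)
  have hge : ∀ P : Finpartition (Finset.univ : Finset M), 2 ≤ P.parts.card →
      ((P.parts.card : ℝ) - 1) * lam ≤ ∑ e ∈ cutE P, w e := by
    intro P hP2
    have h1 : lam ≤ IP w P := csInf_le (hbdd w) ⟨P, hP2, rfl⟩
    rw [hIPcut, ← div_eq_inv_mul] at h1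
    rw [mul_comm]
    exact (le_div_iff₀ (hd P hP2)).1 h1
  obtain ⟨x, hx0, hxw, hxsupp, hxcon, hxtot⟩ :=
    lemA (Finset.univ : Finset M).card (Finset.univ : Finset M) le_rfl huvne w hw lam hlam0 hge
  -- x belongs to Gamma
  have hxMMI : MMI x = lam := by
    apply le_antisymm
    · obtain ⟨P₀, hP02, hP0val⟩ := (hne w).csInf_mem (hfin w)
      calc MMI x ≤ IP x P₀ := csInf_le (hbdd x) ⟨P₀, hP02, rfl⟩
        _ ≤ IP w P₀ := by
            rw [hIPcut, hIPcut]
            exact mul_le_mul_of_nonneg_left (Finset.sum_le_sum fun e _ => hxw e)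
              (inv_nonneg.2 (le_of_lt (hd P₀ hP02)))
        _ = lam := hP0val.symm
    · apply le_csInf (hne x)
      rintro r ⟨P, hP2, rfl⟩
      have h1 := hxcon P hP2
      rw [hIPcut]
      rw [← div_eq_inv_mul, le_div_iff₀ (hd P hP2), mul_comm]
      exact h1
  have hxG : x ∈ Gamma w :=
    ⟨hx0, hxw, by rw [hxMMI, hlamdef]⟩
  -- upper bound
  have hupper : (∑ e : Finset M, xs e) ≤ ((Fintype.card M : ℝ) - 1) * lam := by
    calc (∑ e : Finset M, xs e) ≤ ∑ e : Finset M, x e := hopt x hxG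
      _ = ∑ e ∈ (Finset.univ : Finset M).powerset, x e := by rw [Finset.powerset_univ]
      _ ≤ (((Finset.univ : Finset M).card : ℝ) - 1) * lam := hxtot
      _ = ((Fintype.card M : ℝ) - 1) * lam := by rw [Finset.card_univ]
  -- lower bound
  have hlower : ((Fintype.card M : ℝ) - 1) * lam ≤ ∑ e : Finset M, xs e := by
    obtain ⟨hxs0, hxsw, hxsMMI⟩ := hxs
    have h1 : lam ≤ IP xs ⊥ := by
      rw [hlamdef, ← hxsMMI]
      exact csInf_le (hbdd xs) ⟨⊥, by rw [hbotcard]; exact hm, rfl⟩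
    have h2 : IP xs ⊥ ≤ ((Fintype.card M : ℝ) - 1)⁻¹ * ∑ e : Finset M, xs e := by
      rw [hIPcut, hbotcard]
      apply mul_le_mul_of_nonneg_left
      · exact Finset.sum_le_sum_of_subset_of_nonneg (Finset.subset_univ _) (fun e _ _ => hxs0 e)
      · apply inv_nonneg.2
        have : (2:ℝ) ≤ (Fintype.card M : ℝ) := by exact_mod_cast hm
        linarith
    have hdm : (0:ℝ) < (Fintype.card M : ℝ) - 1 := by
      have : (2:ℝ) ≤ (Fintype.card M : ℝ) := by exact_mod_cast hm
      linarith
    have h3 := h1.trans h2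
    rw [← div_eq_inv_mul, le_div_iff₀ hdm] at h3
    linarith [h3]
  have heq : (∑ e : Finset M, xs e) = ((Fintype.card M : ℝ) - 1) * lam :=
    le_antisymm hupper hlower
  rw [heq]
  ring
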